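/- Let G be a group satisfying the Greenberg–Stallings property and such that for every finitely generated subgroup H the set R(H) = { K : H ≤ K ≤ G, [K:H] < ∞ } has a maximal element. Then every finitely generated subgroup H of G has a root: R(H) has a greatest element. -/

import Mathlib

/-- A finite-index overgroup of a finitely generated subgroup is finitely generated. -/
lemma fg_of_le_of_relindex_ne_zero {G : Type*} [Group G] {H K : Subgroup G}
    (hHK : H ≤ K) (hfg : H.FG) (hrel : H.relIndex K ≠ 0) : K.FG := by
  set H' : Subgroup K := H.subgroupOf K with hH'
  haveI : H'.FiniteIndex := ⟨hrel⟩
  haveI : Finite (K ⧸ H') := Subgroup.finite_quotient_of_finiteIndex ..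
  have hfgH : Group.FG H := (Group.fg_iff_subgroup_fg H).mpr hfg
  have hfgH' : Group.FG H' :=
    Group.fg_of_surjective (f := ((Subgroup.subgroupOfEquivOfLe hHK).symm : H ≃* H').toMonoidHom)
      (Subgroup.subgroupOfEquivOfLe hHK).symm.surjective
  obtain ⟨S, hS⟩ := (Group.fg_iff_subgroup_fg H').mp hfgH'
  have hT : (Set.range (fun q : K ⧸ H' => q.out)).Finite := Set.finite_range _
  have htop : Subgroup.closure ((S : Set K) ∪ Set.range (fun q : K ⧸ H' => q.out)) = ⊤ := by
    rw [eq_top_iff]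
    intro k _
    set t : K := (QuotientGroup.mk k : K ⧸ H').out with ht
    have hmk : (QuotientGroup.mk t : K ⧸ H') = QuotientGroup.mk k := by
      simp [ht]
    have hmem : t⁻¹ * k ∈ H' := (QuotientGroup.eq).mp hmk
    have hk : k = t * (t⁻¹ * k) := by group
    rw [hk]
    refine mul_mem (Subgroup.subset_closure (Or.inr ⟨_, rfl⟩)) ?_
    have : t⁻¹ * k ∈ Subgroup.closure (S : Set K) := hS ▸ hmem
    exact Subgroup.closure_mono Set.subset_union_left this
  have : Group.FG K := Group.fg_iff.mpr
    ⟨(S : Set K) ∪ Set.range (fun q : K ⧸ H' => q.out), htop, (S.finite_toSet).union hT⟩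
  exact (Group.fg_iff_subgroup_fg K).mp this

/-- If `G` satisfies the Greenberg–Stallings property and for every finitely generated
subgroup `H` the set `R(H) = {K | H ≤ K, [K:H] < ∞}` has a maximal element, then every
finitely generated subgroup of `G` has a root: `R(H)` has a greatest element. -/
theorem root_exists_of_GS_and_maximal {G : Type*} [Group G]
    (hGS : ∀ A B : Subgroup G, A.FG → B.FG → (A ⊓ B).relIndex A ≠ 0 →
      (A ⊓ B).relIndex B ≠ 0 → (A ⊓ B).relIndex (A ⊔ B) ≠ 0)
    (hmax : ∀ H : Subgroup G, H.FG → ∃ N : Subgroup G,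
      (H ≤ N ∧ H.relIndex N ≠ 0) ∧
      ∀ K : Subgroup G, (H ≤ K ∧ H.relIndex K ≠ 0) → N ≤ K → N = K) :
    ∀ H : Subgroup G, H.FG → ∃ N : Subgroup G,
      (H ≤ N ∧ H.relIndex N ≠ 0) ∧
      ∀ K : Subgroup G, H ≤ K → H.relIndex K ≠ 0 → K ≤ N := by
  intro H hfg
  obtain ⟨N, ⟨hHN, hrelN⟩, hmaxN⟩ := hmax H hfg
  refine ⟨N, ⟨hHN, hrelN⟩, ?_⟩
  intro K hHK hrelK
  -- N and K are finitely generated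
  have hNfg : N.FG := fg_of_le_of_relindex_ne_zero hHN hfg hrelN
  have hKfg : K.FG := fg_of_le_of_relindex_ne_zero hHK hfg hrelK
  have hHinf : H ≤ N ⊓ K := le_inf hHN hHK
  -- finite relindex facts via multiplicativity
  have hmulN : H.relIndex (N ⊓ K) * (N ⊓ K).relIndex N = H.relIndex N :=
    Subgroup.relIndex_mul_relIndex H (N ⊓ K) N hHinf inf_le_left
  have hmulK : H.relIndex (N ⊓ K) * (N ⊓ K).relIndex K = H.relIndex K :=
    Subgroup.relIndex_mul_relIndex H (N ⊓ K) K hHinf inf_le_right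
  have h1 : (N ⊓ K).relIndex N ≠ 0 := by
    intro h; rw [h, mul_zero] at hmulN; exact hrelN hmulN.symm
  have h2 : (N ⊓ K).relIndex K ≠ 0 := by
    intro h; rw [h, mul_zero] at hmulK; exact hrelK hmulK.symm
  have h0 : H.relIndex (N ⊓ K) ≠ 0 := by
    intro h; rw [h, zero_mul] at hmulN; exact hrelN hmulN.symm
  have hsup : (N ⊓ K).relIndex (N ⊔ K) ≠ 0 := hGS N K hNfg hKfg h1 h2
  have hmulS : H.relIndex (N ⊓ K) * (N ⊓ K).relIndex (N ⊔ K) = H.relIndex (N ⊔ K) :=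
    Subgroup.relIndex_mul_relIndex H (N ⊓ K) (N ⊔ K) hHinf
      (le_trans inf_le_left le_sup_left)
  have hrelS : H.relIndex (N ⊔ K) ≠ 0 := by
    rw [← hmulS]; exact mul_ne_zero h0 hsup
  have := hmaxN (N ⊔ K) ⟨le_trans hHN le_sup_left, hrelS⟩ le_sup_left
  exact le_trans le_sup_right this.ge
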